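/- Let n ≥ 1 and let 𝒪 ⊆ ℕ^n be a finite nonempty order ideal. Then the multivariate formal power series Ind_𝒪(y_1, …, y_n) = Σ_{α ∈ ℕ^n} ind_𝒪(α) y^α ∈ ℚ[[y_1, …, y_n]], multiplied by ∏_{i=1}^n (1 − y_i)², is a polynomial. -/

import Mathlib

/-- An order ideal in ℕ^n: a set of exponent vectors closed under componentwise division. -/
def IsOrderIdeal {n : ℕ} (O : Set (Fin n →₀ ℕ)) : Prop :=
  ∀ α ∈ O, ∀ β : Fin n →₀ ℕ, β ≤ α → β ∈ O

/-- The border of a set `C ⊆ ℕ^n`: `∂C = {α + e_i : α ∈ C, i} \ C`. -/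
def border {n : ℕ} (C : Set (Fin n →₀ ℕ)) : Set (Fin n →₀ ℕ) :=
  {γ | ∃ α ∈ C, ∃ i : Fin n, γ = α + Finsupp.single i 1} \ C

/-- The closed higher borders: `∂̄⁰O = O`, `∂̄ᵏO = ∂(∂̄ᵏ⁻¹O) ∪ ∂̄ᵏ⁻¹O`. -/
def closedBorder {n : ℕ} (O : Set (Fin n →₀ ℕ)) : ℕ → Set (Fin n →₀ ℕ)
  | 0 => O
  | k + 1 => border (closedBorder O k) ∪ closedBorder O k

/-- The higher borders: `∂⁰O = O`, `∂ᵏO = ∂(∂̄ᵏ⁻¹O)`. -/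
def borderIter {n : ℕ} (O : Set (Fin n →₀ ℕ)) : ℕ → Set (Fin n →₀ ℕ)
  | 0 => O
  | k + 1 => border (closedBorder O k)

/-- The index of `α` relative to `O`: the minimal `k` with `α ∈ ∂̄ᵏO`. -/
noncomputable def ind {n : ℕ} (O : Set (Fin n →₀ ℕ)) (α : Fin n →₀ ℕ) : ℕ :=
  sInf {k | α ∈ closedBorder O k}

/-- Total degree of an exponent vector. -/
def deg {n : ℕ} (α : Fin n →₀ ℕ) : ℕ := ∑ i, α i

/-- The multivariate formal power series with prescribed coefficients. -/
noncomputable def seriesOfCoeff {n : ℕ} (f : (Fin n →₀ ℕ) → ℚ) : MvPowerSeries (Fin n) ℚ := f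

section Aux

open Finsupp

variable {n : ℕ}

lemma deg_mono {α β : Fin n →₀ ℕ} (h : α ≤ β) : deg α ≤ deg β :=
  Finset.sum_le_sum fun i _ => (Finsupp.le_def.mp h) i

lemma deg_add (α β : Fin n →₀ ℕ) : deg (α + β) = deg α + deg β := by
  simp [deg, Finsupp.add_apply, Finset.sum_add_distrib]

lemma deg_single (j : Fin n) : deg (Finsupp.single j 1) = 1 := by
  simp [deg, Finsupp.single_apply]

lemma deg_eq_zero {α : Fin n →₀ ℕ} (h : deg α = 0) : α = 0 := by
  ext i
  have := Finset.sum_eq_zero_iff.mp h i (Finset.mem_univ i)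
  simpa using this

lemma deg_sub_single {α : Fin n →₀ ℕ} {j : Fin n} (h : Finsupp.single j 1 ≤ α) :
    deg (α - Finsupp.single j 1) + 1 = deg α := by
  have : α - Finsupp.single j 1 + Finsupp.single j 1 = α := tsub_add_cancel_of_le h
  calc deg (α - Finsupp.single j 1) + 1
      = deg (α - Finsupp.single j 1) + deg (Finsupp.single j 1) := by rw [deg_single]
    _ = deg (α - Finsupp.single j 1 + Finsupp.single j 1) := (deg_add _ _).symm
    _ = deg α := by rw [this]

lemma subset_closedBorder (O : Set (Fin n →₀ ℕ)) (k : ℕ) : O ⊆ closedBorder O k := by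
  induction k with
  | zero => exact fun _ h => h
  | succ k ih => exact fun x hx => Set.mem_union_right _ (ih hx)

lemma closedBorder_mono (O : Set (Fin n →₀ ℕ)) (k : ℕ) :
    closedBorder O k ⊆ closedBorder O (k + 1) := fun x hx => Set.mem_union_right _ hx

lemma mem_closedBorder_iff (O : Set (Fin n →₀ ℕ)) (k : ℕ) (α : Fin n →₀ ℕ) :
    α ∈ closedBorder O k ↔ ∃ β ∈ O, β ≤ α ∧ deg α ≤ deg β + k := by
  constructor
  · intro h
    induction k generalizing α with
    | zero => exact ⟨α, h, le_refl α, by simp⟩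
    | succ k ih =>
      rcases h with h | h
      · obtain ⟨⟨α', hα', i, rfl⟩, -⟩ := h
        obtain ⟨β, hβO, hβle, hβdeg⟩ := ih α' hα'
        exact ⟨β, hβO, le_trans hβle (self_le_add_right _ _), by
          rw [deg_add, deg_single]; omega⟩
      · obtain ⟨β, hβO, hβle, hβdeg⟩ := ih α h
        exact ⟨β, hβO, hβle, by omega⟩
  · rintro ⟨β, hβO, hβle, hdeg⟩
    induction k generalizing α with
    | zero =>
      have h1 : β + (α - β) = α := add_tsub_cancel_of_le hβle
      have h2 : deg β + deg (α - β) = deg α := by rw [← deg_add, h1]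
      have h3 : deg (α - β) = 0 := by omega
      have : α = β := by
        have := deg_eq_zero h3
        have h4 : α ≤ β := by
          rwa [tsub_eq_zero_iff_le] at this
        exact le_antisymm h4 hβle
      rw [this]; exact hβO
    | succ k ih =>
      by_cases hαβ : α = β
      · rw [hαβ]; exact subset_closedBorder O _ hβO
      · have hne : α - β ≠ 0 := by
          intro h0
          exact hαβ (le_antisymm (tsub_eq_zero_iff_le.mp h0) hβle)
        obtain ⟨i, hi⟩ := Finsupp.support_nonempty_iff.mpr hne
        have hi' : β i < α i := by
          have := Finsupp.mem_support_iff.mp hi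
          rw [Finsupp.tsub_apply] at this
          omega
        have hsing : Finsupp.single i 1 ≤ α := Finsupp.single_le_iff.mpr (by omega)
        set α' := α - Finsupp.single i 1 with hα'
        have hβα' : β ≤ α' := by
          rw [Finsupp.le_def]
          intro j
          rw [Finsupp.tsub_apply, Finsupp.single_apply]
          rcases eq_or_ne i j with rfl | hij
          · simpa using by omega
          · simp only [if_neg hij]
            exact (Finsupp.le_def.mp hβle) j
        have hdeg' : deg α' + 1 = deg α := deg_sub_single hsing
        have hdegle : deg α' ≤ deg β + k := by omega
        have hmem : α' ∈ closedBorder O k := ih α' hβα' hdegle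
        have hrec : α = α' + Finsupp.single i 1 := (tsub_add_cancel_of_le hsing).symm
        by_cases hcase : α ∈ closedBorder O k
        · exact closedBorder_mono O k hcase
        · exact Set.mem_union_left _ ⟨⟨α', hmem, i, hrec⟩, hcase⟩

open scoped Classical in
/-- Max degree of an element of `O` dividing `α`. -/
noncomputable def MM (Of : Finset (Fin n →₀ ℕ)) (α : Fin n →₀ ℕ) : ℕ :=
  (Of.filter (· ≤ α)).sup deg

open scoped Classical in
lemma MM_le_deg (Of : Finset (Fin n →₀ ℕ)) (α : Fin n →₀ ℕ) : MM Of α ≤ deg α :=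
  Finset.sup_le fun β hβ => deg_mono (Finset.mem_filter.mp hβ).2

open scoped Classical in
lemma ind_eq_sub (O : Set (Fin n →₀ ℕ)) (hfin : O.Finite) (hne : O.Nonempty)
    (hO : IsOrderIdeal O) (α : Fin n →₀ ℕ) :
    ind O α = deg α - MM hfin.toFinset α := by
  have h0 : (0 : Fin n →₀ ℕ) ∈ O := by
    obtain ⟨β, hβ⟩ := hne
    exact hO β hβ 0 (zero_le)
  have hfilne : ((hfin.toFinset).filter (· ≤ α)).Nonempty :=
    ⟨0, Finset.mem_filter.mpr ⟨hfin.mem_toFinset.mpr h0, zero_le⟩⟩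
  have hset : {k | α ∈ closedBorder O k} = Set.Ici (deg α - MM hfin.toFinset α) := by
    ext k
    rw [Set.mem_setOf_eq, mem_closedBorder_iff, Set.mem_Ici, tsub_le_iff_right]
    constructor
    · rintro ⟨β, hβO, hβle, hdeg⟩
      have hβ : deg β ≤ MM hfin.toFinset α :=
        Finset.le_sup (Finset.mem_filter.mpr ⟨hfin.mem_toFinset.mpr hβO, hβle⟩)
      omega
    · intro h
      obtain ⟨β, hβmem, hβ⟩ := Finset.exists_mem_eq_sup _ hfilne deg
      obtain ⟨hβO, hβle⟩ := Finset.mem_filter.mp hβmem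
      exact ⟨β, hfin.mem_toFinset.mp hβO, hβle, by rw [MM] at h; omega⟩
  rw [ind, hset, csInf_Ici]

open scoped Classical in
lemma MM_sub_single (Of : Finset (Fin n →₀ ℕ)) {α : Fin n →₀ ℕ} {j : Fin n} {D : ℕ}
    (hD : ∀ β ∈ Of, deg β ≤ D) (h : D < α j) :
    MM Of (α - Finsupp.single j 1) = MM Of α := by
  unfold MM
  congr 1
  apply Finset.filter_congr
  intro β hβ
  constructor
  · intro hle; exact le_trans hle tsub_le_self
  · intro hle
    rw [Finsupp.le_def]
    intro i
    rw [Finsupp.tsub_apply, Finsupp.single_apply]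
    have hβi : β i ≤ deg β := Finset.single_le_sum (fun k _ => Nat.zero_le _) (Finset.mem_univ i)
    have hβD := hD β hβ
    have hlei := (Finsupp.le_def.mp hle) i
    split_ifs with hji
    · subst hji
      omega
    · omega

end Aux

section Series

open Finsupp MvPowerSeries

variable {n : ℕ}

lemma coeff_seriesOfCoeff (f : (Fin n →₀ ℕ) → ℚ) (γ : Fin n →₀ ℕ) :
    MvPowerSeries.coeff γ (seriesOfCoeff f) = f γ := rfl

open scoped Classical in
/-- The discrete difference operator in direction `j`. -/
noncomputable def Del (j : Fin n) (f : (Fin n →₀ ℕ) → ℚ) : (Fin n →₀ ℕ) → ℚ :=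
  fun γ => f γ - if Finsupp.single j 1 ≤ γ then f (γ - Finsupp.single j 1) else 0

lemma one_sub_X_mul (j : Fin n) (f : (Fin n →₀ ℕ) → ℚ) :
    (1 - MvPowerSeries.X j) * seriesOfCoeff f = seriesOfCoeff (Del j f) := by
  classical
  ext γ
  rw [sub_mul, one_mul, map_sub, coeff_seriesOfCoeff, coeff_seriesOfCoeff,
    MvPowerSeries.X, MvPowerSeries.coeff_monomial_mul]
  unfold Del
  split_ifs with h
  · rw [one_mul, coeff_seriesOfCoeff]
  · rfl

lemma Del_comm (i j : Fin n) (f : (Fin n →₀ ℕ) → ℚ) : Del i (Del j f) = Del j (Del i f) := by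
  classical
  rcases eq_or_ne i j with rfl | hij
  · rfl
  funext γ
  unfold Del
  have key : ∀ (a b : Fin n), a ≠ b → Finsupp.single a 1 ≤ γ →
      (Finsupp.single b 1 ≤ γ - Finsupp.single a 1 ↔ Finsupp.single b 1 ≤ γ) := by
    intro a b hab ha
    rw [Finsupp.single_le_iff, Finsupp.single_le_iff, Finsupp.tsub_apply,
      Finsupp.single_apply, if_neg hab]
    omega
  by_cases hi : Finsupp.single i 1 ≤ γ <;> by_cases hj : Finsupp.single j 1 ≤ γ
  · have k1 := propext (key i j hij hi)
    have k2 := propext (key j i hij.symm hj)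
    have hcom : γ - Finsupp.single i 1 - Finsupp.single j 1
        = γ - Finsupp.single j 1 - Finsupp.single i 1 := tsub_right_comm
    simp only [k1, k2, hi, hj, if_true, hcom]
    ring
  · have k1 := propext (key i j hij hi)
    simp only [k1, hi, hj, if_true, if_false]
    ring
  · have k2 := propext (key j i hij.symm hj)
    simp only [k2, hi, hj, if_true, if_false]
    ring
  · simp [hi, hj]

lemma Del_vanish {B : ℕ} {j a : Fin n} (hij : a ≠ j) {f : (Fin n →₀ ℕ) → ℚ}
    (h : ∀ γ, B ≤ γ j → f γ = 0) :
    ∀ γ, B ≤ γ j → Del a f γ = 0 := by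
  classical
  intro γ hγ
  unfold Del
  rw [h γ hγ]
  split_ifs with ha
  · rw [h _ (by rw [Finsupp.tsub_apply, Finsupp.single_apply, if_neg hij]; omega)]
    ring
  · ring

lemma main_induction (B : ℕ) (s : Finset (Fin n)) (f : (Fin n →₀ ℕ) → ℚ)
    (hf : ∀ j : Fin n, ∀ γ, B ≤ γ j → Del j (Del j f) γ = 0) :
    ∃ g : (Fin n →₀ ℕ) → ℚ,
      (∏ j ∈ s, (1 - MvPowerSeries.X j : MvPowerSeries (Fin n) ℚ) ^ 2) * seriesOfCoeff f
        = seriesOfCoeff g ∧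
      (∀ j ∉ s, ∀ γ, B ≤ γ j → Del j (Del j g) γ = 0) ∧
      (∀ j ∈ s, ∀ γ, B ≤ γ j → g γ = 0) := by
  classical
  induction s using Finset.induction with
  | empty =>
    exact ⟨f, by simp, fun j _ => hf j, fun j hj => absurd hj (Finset.notMem_empty j)⟩
  | @insert a s ha ih =>
    obtain ⟨g, hg, hP, hZ⟩ := ih
    refine ⟨Del a (Del a g), ?_, ?_, ?_⟩
    · rw [Finset.prod_insert ha, mul_assoc, hg, sq, mul_assoc, one_sub_X_mul, one_sub_X_mul]
    · intro j hj γ hγ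
      have hjs : j ∉ s := fun h => hj (Finset.mem_insert_of_mem h)
      have hja : j ≠ a := fun h => hj (h ▸ Finset.mem_insert_self a s)
      have hPg := hP j hjs
      have step1 : ∀ γ, B ≤ γ j → Del a (Del j (Del j g)) γ = 0 :=
        Del_vanish hja.symm hPg
      have step2 : ∀ γ, B ≤ γ j → Del a (Del a (Del j (Del j g))) γ = 0 :=
        Del_vanish hja.symm step1
      calc Del j (Del j (Del a (Del a g))) γ
          = Del a (Del a (Del j (Del j g))) γ := by
            rw [Del_comm j a (Del a g), Del_comm j a g, Del_comm j a (Del a (Del j g)),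
              Del_comm j a (Del j g)]
        _ = 0 := step2 γ hγ
    · intro j hj γ hγ
      rcases Finset.mem_insert.mp hj with rfl | hjs
      · exact hP j ha γ hγ
      · have hja : j ≠ a := fun h => ha (h ▸ hjs)
        exact Del_vanish hja.symm (Del_vanish hja.symm (hZ j hjs)) γ hγ

end Series

/-- For a finite nonempty order ideal `O ⊆ ℕ^n`, the generating function
`Ind_O(y₁,…,yₙ) = Σ_α ind_O(α) y^α`, multiplied by `∏ᵢ (1-yᵢ)²`, is a polynomial. -/
theorem ind_genFun_rational (n : ℕ) (hn : 1 ≤ n) (O : Set (Fin n →₀ ℕ))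
    (hfin : O.Finite) (hne : O.Nonempty) (hO : IsOrderIdeal O) :
    ∃ p : MvPolynomial (Fin n) ℚ,
      (∏ i : Fin n, (1 - MvPowerSeries.X i) ^ 2) *
        seriesOfCoeff (fun α => (ind O α : ℚ)) = ↑p := by
  classical
  set Of := hfin.toFinset with hOf
  set D := Of.sup deg with hD
  have hDle : ∀ β ∈ Of, deg β ≤ D := fun β hβ => Finset.le_sup hβ
  set f : (Fin n →₀ ℕ) → ℚ := fun α => (ind O α : ℚ) with hfdef
  -- the key second-difference vanishing for `ind`
  have hf : ∀ j : Fin n, ∀ γ, D + 2 ≤ γ j → Del j (Del j f) γ = 0 := by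
    intro j γ hγ
    have h1 : Finsupp.single j 1 ≤ γ := Finsupp.single_le_iff.mpr (by omega)
    have hγ1 : (γ - Finsupp.single j 1 : Fin n →₀ ℕ) j = γ j - 1 := by
      rw [Finsupp.tsub_apply]
      simp
    have h2 : Finsupp.single j 1 ≤ γ - Finsupp.single j 1 :=
      Finsupp.single_le_iff.mpr (by omega)
    unfold Del
    rw [if_pos h1, if_pos h1, if_pos h2]
    -- values of ind
    have hval : ∀ α : Fin n →₀ ℕ, f α = (deg α : ℚ) - (MM Of α : ℚ) := by
      intro α
      rw [hfdef]
      simp only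
      rw [ind_eq_sub O hfin hne hO α, Nat.cast_sub (MM_le_deg Of α)]
    have hM1 : MM Of (γ - Finsupp.single j 1) = MM Of γ :=
      MM_sub_single Of hDle (by omega)
    have hM2 : MM Of (γ - Finsupp.single j 1 - Finsupp.single j 1)
        = MM Of (γ - Finsupp.single j 1) :=
      MM_sub_single Of hDle (by omega)
    have hd1 : deg (γ - Finsupp.single j 1) + 1 = deg γ := deg_sub_single h1
    have hd2 : deg (γ - Finsupp.single j 1 - Finsupp.single j 1) + 1
        = deg (γ - Finsupp.single j 1) := deg_sub_single h2
    rw [hval, hval, hval, hM1, hM2, hM1]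
    have e1 : (deg (γ - Finsupp.single j 1) : ℚ) = (deg γ : ℚ) - 1 := by
      have := hd1; push_cast [← this]; ring
    have e2 : (deg (γ - Finsupp.single j 1 - Finsupp.single j 1) : ℚ)
        = (deg γ : ℚ) - 2 := by
      have h22 : deg (γ - Finsupp.single j 1 - Finsupp.single j 1) + 2 = deg γ := by omega
      rw [← h22]; push_cast; ring
    rw [e1, e2]
    ring
  obtain ⟨g, hg, -, hZ⟩ := main_induction (D + 2) Finset.univ f hf
  -- build the polynomial
  set c : Fin n →₀ ℕ := Finsupp.equivFunOnFinite.symm (fun _ => D + 2) with hc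
  have hcj : ∀ j, c j = D + 2 := fun j => rfl
  refine ⟨∑ γ ∈ Finset.Iic c, MvPolynomial.monomial γ (g γ), ?_⟩
  rw [hg]
  ext γ
  rw [coeff_seriesOfCoeff, MvPolynomial.coeff_coe, MvPolynomial.coeff_sum]
  simp only [MvPolynomial.coeff_monomial]
  rw [Finset.sum_ite_eq' (Finset.Iic c) γ g]
  by_cases hγc : γ ∈ Finset.Iic c
  · rw [if_pos hγc]
  · rw [if_neg hγc]
    have : ¬ γ ≤ c := by simpa using hγc
    rw [Finsupp.le_def] at this
    push_neg at this
    obtain ⟨j, hj⟩ := this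
    rw [hcj j] at hj
    exact hZ j (Finset.mem_univ j) γ (by omega)
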